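/- Let g ∈ L^1_loc(ℂ) and 0 < p < ∞. Then the integral modulus of continuity satisfies the two-sided comparison ω_p(g)(t) ≈_p ( ∫_ℂ ⨍_{B(x,t)} |g(x) − g(y)|^p dm(y) dm(x) )^{1/p}, with implicit constants depending only on p. -/

import Mathlib

open MeasureTheory ENNReal Metric

noncomputable section

/-- Integral modulus of continuity of exponent `p` for functions on `ℂ`. -/
def modC (p : ℝ≥0∞) (f : ℂ → ℂ) (t : ℝ) : ℝ≥0∞ :=
  ⨆ y : {y : ℂ // ‖y‖ ≤ t}, eLpNorm (f - fun x => f (x - y.1)) p volume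

/-- The double-average quantity
`( ∫_ℂ ⨍_{B(x,t)} |g(x) − g(y)|^p dm(y) dm(x) )^{1/p}` (in `ℝ≥0∞`). -/
def dblAvg (p : ℝ) (g : ℂ → ℂ) (t : ℝ) : ℝ≥0∞ :=
  (∫⁻ x : ℂ, (volume (ball x t))⁻¹ *
      ∫⁻ y in ball x t, (‖g x - g y‖₊ : ℝ≥0∞) ^ p) ^ (1 / p)

lemma ballSub (f : ℂ → ℝ≥0∞) (x : ℂ) (t : ℝ) :
    ∫⁻ z in ball x t, f z = ∫⁻ h in ball (0:ℂ) t, f (x - h) := by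
  have hmp : MeasurePreserving (fun h : ℂ => x - h) volume volume :=
    Measure.measurePreserving_sub_left volume x
  have hemb : MeasurableEmbedding (fun h : ℂ => x - h) :=
    (MeasurableEquiv.subLeft x).measurableEmbedding
  have himg : (fun h : ℂ => x - h) '' ball 0 t = ball x t := by
    have hinv : Function.Involutive (fun h : ℂ => x - h) := fun h => by ring
    rw [Set.image_eq_preimage_of_inverse hinv hinv]
    ext z
    simp [mem_ball, dist_eq_norm, norm_sub_rev]
  rw [← himg, ← hmp.setLIntegral_comp_emb hemb f (ball 0 t)]

lemma isup_rpow {ι : Sort*} {p : ℝ} (hp : 0 < p) (s : ι → ℝ≥0∞) :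
    (⨆ i, s i ^ (1/p)) = (⨆ i, s i) ^ (1/p) := by
  apply le_antisymm
  · exact iSup_le fun i => ENNReal.rpow_le_rpow (le_iSup s i) (by positivity)
  · have h : (⨆ i, s i) ≤ (⨆ i, s i ^ (1/p)) ^ p := by
      refine iSup_le fun i => ?_
      have : s i = (s i ^ (1/p)) ^ p := by
        rw [← ENNReal.rpow_mul, one_div_mul_cancel hp.ne', ENNReal.rpow_one]
      rw [this]
      exact ENNReal.rpow_le_rpow (le_iSup (fun i => s i ^ (1/p)) i) hp.le
    calc (⨆ i, s i) ^ (1/p) ≤ ((⨆ i, s i ^ (1/p)) ^ p) ^ (1/p) :=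
          ENNReal.rpow_le_rpow h (by positivity)
      _ = ⨆ i, s i ^ (1/p) := by
          rw [← ENNReal.rpow_mul, mul_one_div_cancel hp.ne', ENNReal.rpow_one]

lemma tri_rpow {p : ℝ} (hp : 0 < p) (u v w : ℂ) :
    (‖u - w‖₊ : ℝ≥0∞) ^ p ≤ 2 ^ p * ((‖u - v‖₊ : ℝ≥0∞) ^ p + (‖v - w‖₊ : ℝ≥0∞) ^ p) := by
  set a : ℝ≥0∞ := (‖u - v‖₊ : ℝ≥0∞)
  set b : ℝ≥0∞ := (‖v - w‖₊ : ℝ≥0∞)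
  have h1 : (‖u - w‖₊ : ℝ≥0∞) ≤ a + b := by
    rw [← ENNReal.coe_add, ENNReal.coe_le_coe, ← nndist_eq_nnnorm_sub, ← nndist_eq_nnnorm_sub,
      ← nndist_eq_nnnorm_sub]
    exact nndist_triangle u v w
  have h2 : a + b ≤ 2 * max a b := by
    rw [two_mul]
    exact add_le_add (le_max_left a b) (le_max_right a b)
  calc (‖u - w‖₊ : ℝ≥0∞) ^ p ≤ (2 * max a b) ^ p :=
        ENNReal.rpow_le_rpow (h1.trans h2) hp.le
    _ = 2 ^ p * (max a b) ^ p := ENNReal.mul_rpow_of_nonneg _ _ hp.le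
    _ ≤ 2 ^ p * (a ^ p + b ^ p) := by
        gcongr
        rcases le_total a b with h | h
        · rw [max_eq_right h]; exact le_add_self
        · rw [max_eq_left h]; exact self_le_add_right _ _

lemma modC_eq {p : ℝ} (hp : 0 < p) (g : ℂ → ℂ) (t : ℝ) :
    modC (ENNReal.ofReal p) g t
      = (⨆ y : {y : ℂ // ‖y‖ ≤ t}, ∫⁻ x, (‖g x - g (x - y.1)‖₊ : ℝ≥0∞) ^ p) ^ (1/p) := by
  rw [modC, ← isup_rpow hp]
  congr 1
  funext y
  rw [eLpNorm_eq_lintegral_rpow_enorm_toReal (by simp [ENNReal.ofReal_eq_zero]; linarith)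
    ENNReal.ofReal_ne_top, ENNReal.toReal_ofReal hp.le]
  simp [Pi.sub_apply, enorm_eq_nnnorm]

theorem stmt4 (p : ℝ) (hp : 0 < p) :
    ∃ c C : ℝ≥0∞, 0 < c ∧ C < ∞ ∧
      ∀ (g : ℂ → ℂ), LocallyIntegrable g volume → ∀ t : ℝ, 0 < t →
        c * dblAvg p g t ≤ modC (ENNReal.ofReal p) g t ∧
        modC (ENNReal.ofReal p) g t ≤ C * dblAvg p g t := by
  have h2top : (2:ℝ≥0∞) ^ p ≠ ∞ := ENNReal.rpow_ne_top_of_nonneg hp.le (by simp)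
  refine ⟨1, (8 * (2:ℝ≥0∞) ^ p) ^ (1/p), one_pos, ?_, ?_⟩
  · exact ENNReal.rpow_lt_top_of_nonneg (by positivity) (ENNReal.mul_ne_top (by simp) h2top)
  intro g hg t ht
  have hg' : AEMeasurable g volume := hg.aestronglyMeasurable.aemeasurable
  set κ := volume (ball (0:ℂ) t) with hκdef
  set κ' := volume (ball (0:ℂ) (t/2)) with hκ'def
  have hκ0 : κ ≠ 0 := (measure_ball_pos volume 0 ht).ne'
  have hκtop : κ ≠ ∞ := measure_ball_lt_top.ne
  have hκ'0 : κ' ≠ 0 := (measure_ball_pos volume 0 (by linarith)).ne'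
  have hκ'top : κ' ≠ ∞ := measure_ball_lt_top.ne
  have hκeq : κ = 4 * κ' := by
    rw [hκdef, hκ'def, Measure.addHaar_ball _ _ ht.le,
      Measure.addHaar_ball _ _ (by linarith : (0:ℝ) ≤ t/2), Complex.finrank_real_complex,
      ← mul_assoc]
    congr 1
    rw [show (4:ℝ≥0∞) = ENNReal.ofReal 4 by norm_num, ← ENNReal.ofReal_mul (by norm_num)]
    congr 1; ring
  set N : ℂ × ℂ → ℝ≥0∞ := fun q => (‖g q.1 - g q.2‖₊ : ℝ≥0∞) ^ p with hNdef
  have hrp : Measurable fun a : ℝ≥0∞ => a ^ p := measurable_id.pow_const p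
  have h1 : AEMeasurable (fun q : ℂ × ℂ => g q.1) (volume.prod volume) :=
    hg'.comp_quasiMeasurePreserving Measure.quasiMeasurePreserving_fst
  have h2 : AEMeasurable (fun q : ℂ × ℂ => g q.2) (volume.prod volume) :=
    hg'.comp_quasiMeasurePreserving Measure.quasiMeasurePreserving_snd
  have hN : AEMeasurable N (volume.prod volume) := hrp.comp_aemeasurable (h1.sub h2).enorm
  have hmp2 : MeasurePreserving (fun q : ℂ × ℂ => (q.1, q.1 - q.2))
      ((volume : Measure ℂ).prod volume) ((volume : Measure ℂ).prod volume) := by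
    have e1 : MeasurePreserving (fun q : ℂ × ℂ => (q.1, -q.2))
        ((volume : Measure ℂ).prod volume) ((volume : Measure ℂ).prod volume) :=
      (MeasurePreserving.id volume).prod (Measure.measurePreserving_neg volume)
    have e2 := measurePreserving_prod_add_right (volume : Measure ℂ) volume
    have heq : (fun q : ℂ × ℂ => (q.1, q.1 - q.2))
        = (fun z : ℂ × ℂ => (z.1, z.2 + z.1)) ∘ (fun q : ℂ × ℂ => (q.1, -q.2)) := by
      funext q; simp [Function.comp, sub_eq_neg_add]
    rw [heq]
    exact e2.comp e1
  have hF : AEMeasurable (fun q : ℂ × ℂ => N (q.1, q.1 - q.2)) (volume.prod volume) :=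
    hN.comp_quasiMeasurePreserving hmp2.quasiMeasurePreserving
  set I : ℂ → ℝ≥0∞ := fun h => ∫⁻ x, N (x, x - h) with hIdef
  set M : ℝ≥0∞ := ⨆ y : {y : ℂ // ‖y‖ ≤ t}, I y.1 with hMdef
  set u : ℂ → ℝ≥0∞ := fun x => ∫⁻ z in ball x t, N (x, z) with hudef
  set Draw : ℝ≥0∞ := ∫⁻ x, u x with hDdef
  -- dblAvg in terms of Draw
  have hdbl : dblAvg p g t = (κ⁻¹ * Draw) ^ (1/p) := by
    rw [dblAvg, hDdef]
    congr 1
    rw [← lintegral_const_mul' _ _ (ENNReal.inv_ne_top.2 hκ0)]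
    refine lintegral_congr fun x => ?_
    rw [Measure.addHaar_ball_center]
  -- Tonelli swap
  have husub : ∀ x, u x = ∫⁻ h in ball (0:ℂ) t, N (x, x - h) :=
    fun x => ballSub (fun z => N (x, z)) x t
  have hswap : Draw = ∫⁻ h in ball (0:ℂ) t, I h := by
    have hind : ∀ (x h : ℂ), (ball (0:ℂ) t).indicator (fun h' => N (x, x - h')) h
        = (ball (0:ℂ) t).indicator (fun _ => (1:ℝ≥0∞)) h * N (x, x - h) := by
      intro x h
      by_cases hh : h ∈ ball (0:ℂ) t <;>
        simp [Set.indicator_of_mem, Set.indicator_of_notMem, hh]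
    calc Draw = ∫⁻ x, ∫⁻ h, (ball (0:ℂ) t).indicator (fun _ => (1:ℝ≥0∞)) h * N (x, x - h) := by
          refine lintegral_congr fun x => ?_
          rw [husub x, ← lintegral_indicator measurableSet_ball]
          exact lintegral_congr fun h => hind x h
      _ = ∫⁻ h, ∫⁻ x, (ball (0:ℂ) t).indicator (fun _ => (1:ℝ≥0∞)) h * N (x, x - h) := by
          refine lintegral_lintegral_swap ?_
          exact (((measurable_const.indicator measurableSet_ball).comp
            measurable_snd).aemeasurable.mul hF)
      _ = ∫⁻ h in ball (0:ℂ) t, I h := by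
          rw [← lintegral_indicator measurableSet_ball]
          refine lintegral_congr fun h => ?_
          by_cases hh : h ∈ ball (0:ℂ) t
          · simp only [Set.indicator_of_mem hh, one_mul, hIdef]
          · simp [Set.indicator_of_notMem hh]
  -- direction 1 : κ⁻¹ * Draw ≤ M
  have hDM : κ⁻¹ * Draw ≤ M := by
    have hd1 : Draw ≤ M * κ := by
      rw [hswap]
      calc ∫⁻ h in ball (0:ℂ) t, I h ≤ ∫⁻ _ in ball (0:ℂ) t, M := by
            refine setLIntegral_mono measurable_const fun h hh => ?_
            exact le_iSup (fun y : {y : ℂ // ‖y‖ ≤ t} => I y.1) ⟨h, (mem_ball_zero_iff.1 hh).le⟩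
        _ = M * κ := by rw [setLIntegral_const]
    calc κ⁻¹ * Draw ≤ κ⁻¹ * (M * κ) := by gcongr
      _ = M := by rw [mul_comm M κ, ← mul_assoc, ENNReal.inv_mul_cancel hκ0 hκtop, one_mul]
  -- measurability of u
  have hu_meas : AEMeasurable u volume := by
    set s : Set (ℂ × ℂ) := {q : ℂ × ℂ | q.2 ∈ ball q.1 t} with hsdef
    have hs : MeasurableSet s :=
      (isOpen_lt (continuous_snd.dist continuous_fst) continuous_const).measurableSet
    have hG : AEMeasurable (s.indicator N) (volume.prod volume) := hN.indicator hs
    have hueq : ∀ x, u x = ∫⁻ z, s.indicator N (x, z) := by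
      intro x
      rw [hudef]
      simp only []
      rw [← lintegral_indicator measurableSet_ball]
      refine lintegral_congr fun z => ?_
      by_cases hz : z ∈ ball x t
      · rw [Set.indicator_of_mem hz, Set.indicator_of_mem (by exact hz)]
      · rw [Set.indicator_of_notMem hz, Set.indicator_of_notMem (by exact hz)]
    have hae : ∀ᵐ x ∂(volume : Measure ℂ),
        (∫⁻ z, s.indicator N (x, z)) = ∫⁻ z, hG.mk _ (x, z) := by
      filter_upwards [Measure.ae_ae_of_ae_prod hG.ae_eq_mk] with x hx using lintegral_congr_ae hx
    refine (Measurable.lintegral_prod_right' (ν := volume) hG.measurable_mk).aemeasurable.congr ?_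
    filter_upwards [hae] with x hx
    rw [hueq x]
    exact hx.symm
  -- direction 2
  have hIh : ∀ y : {y : ℂ // ‖y‖ ≤ t}, I y.1 ≤ (8 * 2 ^ p) * (κ⁻¹ * Draw) := by
    rintro ⟨h, hy⟩
    have hball' : ∀ x : ℂ, volume (ball (x - h/2) (t/2)) = κ' :=
      fun x => Measure.addHaar_ball_center volume _ _
    have hnh : ‖h/2‖ ≤ t/2 := by
      rw [norm_div]
      simp only [Complex.norm_ofNat]
      linarith
    have hsubset1 : ∀ x : ℂ, ball (x - h/2) (t/2) ⊆ ball x t := by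
      intro x z hz
      rw [mem_ball] at hz ⊢
      calc dist z x ≤ dist z (x - h/2) + dist (x - h/2) x := dist_triangle _ _ _
        _ < t/2 + t/2 := by
            refine add_lt_add_of_lt_of_le hz ?_
            rw [dist_eq_norm, show x - h/2 - x = -(h/2) by ring, norm_neg]
            exact hnh
        _ = t := by ring
    have hsubset2 : ∀ x : ℂ, ball (x + h/2) (t/2) ⊆ ball x t := by
      intro x z hz
      rw [mem_ball] at hz ⊢
      calc dist z x ≤ dist z (x + h/2) + dist (x + h/2) x := dist_triangle _ _ _
        _ < t/2 + t/2 := by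
            refine add_lt_add_of_lt_of_le hz ?_
            rw [dist_eq_norm, show x + h/2 - x = h/2 by ring]
            exact hnh
        _ = t := by ring
    have key : ∀ x : ℂ, N (x, x - h)
        ≤ κ'⁻¹ * (2 ^ p * (u x + ∫⁻ z in ball (x - h/2) (t/2), N (x - h, z))) := by
      intro x
      have hAx : AEMeasurable (fun z => N (x, z)) (volume.restrict (ball (x - h/2) (t/2))) := by
        simp only [hNdef]
        exact (hrp.comp_aemeasurable ((aemeasurable_const.sub hg').enorm)).restrict
      have e1 : N (x, x - h) = κ'⁻¹ * (N (x, x - h) * κ') := by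
        rw [mul_comm (N (x, x - h)) κ', ← mul_assoc, ENNReal.inv_mul_cancel hκ'0 hκ'top, one_mul]
      rw [e1]
      gcongr κ'⁻¹ * ?_
      rw [← hball' x, ← setLIntegral_const]
      calc (∫⁻ _ in ball (x - h/2) (t/2), N (x, x - h))
          ≤ ∫⁻ z in ball (x - h/2) (t/2), 2 ^ p * (N (x, z) + N (x - h, z)) := by
            refine lintegral_mono fun z => ?_
            have htri := tri_rpow hp (g x) (g z) (g (x - h))
            rw [show ‖g z - g (x - h)‖₊ = ‖g (x - h) - g z‖₊ by rw [← nnnorm_neg, neg_sub]] at htri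
            exact htri
        _ = 2 ^ p * ((∫⁻ z in ball (x - h/2) (t/2), N (x, z))
              + ∫⁻ z in ball (x - h/2) (t/2), N (x - h, z)) := by
            rw [lintegral_const_mul' _ _ h2top, lintegral_add_left' hAx]
        _ ≤ 2 ^ p * (u x + ∫⁻ z in ball (x - h/2) (t/2), N (x - h, z)) := by
            gcongr
            exact lintegral_mono_set (hsubset1 x)
    have hb : I h ≤ κ'⁻¹ * (2 ^ p
        * ∫⁻ x, (u x + ∫⁻ z in ball (x - h/2) (t/2), N (x - h, z))) := by
      calc I h ≤ ∫⁻ x, κ'⁻¹ * (2 ^ p * (u x + ∫⁻ z in ball (x - h/2) (t/2), N (x - h, z))) :=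
            lintegral_mono key
        _ = _ := by
            rw [lintegral_const_mul' _ _ (ENNReal.inv_ne_top.2 hκ'0),
              lintegral_const_mul' _ _ h2top]
    have hsplit : (∫⁻ x, (u x + ∫⁻ z in ball (x - h/2) (t/2), N (x - h, z)))
        = Draw + ∫⁻ x, ∫⁻ z in ball (x - h/2) (t/2), N (x - h, z) :=
      lintegral_add_left' hu_meas _
    have hW : (∫⁻ x, ∫⁻ z in ball (x - h/2) (t/2), N (x - h, z))
        = ∫⁻ x, ∫⁻ z in ball (x + h/2) (t/2), N (x, z) := by
      calc (∫⁻ x, ∫⁻ z in ball (x - h/2) (t/2), N (x - h, z))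
          = ∫⁻ x, (fun x' => ∫⁻ z in ball (x' + h/2) (t/2), N (x', z)) (x - h) := by
            refine lintegral_congr fun x => ?_
            simp only []
            rw [show x - h/2 = (x - h) + h/2 by ring]
        _ = _ := lintegral_sub_right_eq_self (fun x' => ∫⁻ z in ball (x' + h/2) (t/2), N (x', z)) h
    have hW2 : (∫⁻ x, ∫⁻ z in ball (x + h/2) (t/2), N (x, z)) ≤ Draw := by
      rw [hDdef]
      exact lintegral_mono fun x => lintegral_mono_set (hsubset2 x)
    have hκ'inv : κ'⁻¹ = 4 * κ⁻¹ := by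
      rw [hκeq, ENNReal.mul_inv (Or.inl (by norm_num)) (Or.inl (by norm_num)), ← mul_assoc,
        ENNReal.mul_inv_cancel (by norm_num) (by norm_num), one_mul]
    calc I h ≤ κ'⁻¹ * (2 ^ p * (Draw + Draw)) := by
          refine hb.trans ?_
          gcongr
          rw [hsplit, hW]
          gcongr
      _ = (8 * 2 ^ p) * (κ⁻¹ * Draw) := by
          rw [hκ'inv, ← two_mul]
          ring
  have hMD : M ≤ (8 * 2 ^ p) * (κ⁻¹ * Draw) := by
    rw [hMdef]
    exact iSup_le hIh
  constructor
  · rw [one_mul, hdbl, modC_eq hp g t]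
    exact ENNReal.rpow_le_rpow hDM (by positivity)
  · rw [hdbl, modC_eq hp g t]
    calc (⨆ y : {y : ℂ // ‖y‖ ≤ t}, ∫⁻ x, (‖g x - g (x - y.1)‖₊ : ℝ≥0∞) ^ p) ^ (1/p)
        ≤ ((8 * 2 ^ p) * (κ⁻¹ * Draw)) ^ (1/p) := ENNReal.rpow_le_rpow hMD (by positivity)
      _ = (8 * 2 ^ p) ^ (1/p) * (κ⁻¹ * Draw) ^ (1/p) :=
          ENNReal.mul_rpow_of_nonneg _ _ (by positivity)
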